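/- Let Λ = Z_p⟦X⟧, T^ord = Λ[y,z]/(y(y−p), z(z−X)), and let T^⊥ = Λ[y,z]/(y(y−p), z(z−X), (y−p)(z−X)) with J^⊥ the image of the ideal (y,z). Then T^⊥/J^⊥ ≅ Λ/(pX), and the three congruence modules at the minimal primes η₁ = (y, z−X), η₂ = (y−p, z), η₃ = (y−p, z−X) satisfy: (J^⊥+η₁)/((J^⊥)²+η₁) ≅ Z_p, (J^⊥+η₂)/((J^⊥)²+η₂) ≅ F_p⟦X⟧, and (J^⊥+η₃)/((J^⊥)²+η₃) ≅ m_Λ/m_Λ². -/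

import Mathlib

set_option synthInstance.maxHeartbeats 1000000
set_option maxHeartbeats 2000000

open IsLocalRing

/-- The one-variable Iwasawa algebra `Λ = ℤ_p⟦X⟧`. -/
abbrev Lam13 (p : ℕ) [Fact p.Prime] : Type := PowerSeries ℤ_[p]

/-- `y ∈ Λ[y,z]`. -/
noncomputable abbrev y13 (p : ℕ) [Fact p.Prime] : MvPolynomial (Fin 2) (Lam13 p) :=
  MvPolynomial.X 0

/-- `z ∈ Λ[y,z]`. -/
noncomputable abbrev z13 (p : ℕ) [Fact p.Prime] : MvPolynomial (Fin 2) (Lam13 p) :=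
  MvPolynomial.X 1

/-- The ideal `(y(y−p), z(z−X), (y−p)(z−X)) ⊆ Λ[y,z]`. -/
noncomputable def Iperp (p : ℕ) [Fact p.Prime] : Ideal (MvPolynomial (Fin 2) (Lam13 p)) :=
  Ideal.span
    {y13 p * (y13 p - MvPolynomial.C ((p : Lam13 p))),
     z13 p * (z13 p - MvPolynomial.C PowerSeries.X),
     (y13 p - MvPolynomial.C ((p : Lam13 p))) * (z13 p - MvPolynomial.C PowerSeries.X)}

/-- The ring `T^⊥ = Λ[y,z]/(y(y−p), z(z−X), (y−p)(z−X))`. -/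
abbrev Tperp (p : ℕ) [Fact p.Prime] : Type :=
  MvPolynomial (Fin 2) (Lam13 p) ⧸ Iperp p

noncomputable instance Tperp.instCommRing (p : ℕ) [Fact p.Prime] : CommRing (Tperp p) :=
  Ideal.Quotient.commRing (Iperp p)

/-- The image `J^⊥` of the ideal `(y, z)` in `T^⊥`. -/
noncomputable def Jperp (p : ℕ) [Fact p.Prime] : Ideal (Tperp p) :=
  (Ideal.span {y13 p, z13 p}).map (Ideal.Quotient.mk (Iperp p))

/-- The minimal prime `η₁ = (y, z − X)` of `T^⊥`. -/
noncomputable def eta1 (p : ℕ) [Fact p.Prime] : Ideal (Tperp p) :=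
  (Ideal.span {y13 p, z13 p - MvPolynomial.C PowerSeries.X}).map (Ideal.Quotient.mk (Iperp p))

/-- The minimal prime `η₂ = (y − p, z)` of `T^⊥`. -/
noncomputable def eta2 (p : ℕ) [Fact p.Prime] : Ideal (Tperp p) :=
  (Ideal.span {y13 p - MvPolynomial.C ((p : Lam13 p)), z13 p}).map (Ideal.Quotient.mk (Iperp p))

/-- The minimal prime `η₃ = (y − p, z − X)` of `T^⊥`. -/
noncomputable def eta3 (p : ℕ) [Fact p.Prime] : Ideal (Tperp p) :=
  (Ideal.span {y13 p - MvPolynomial.C ((p : Lam13 p)),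
    z13 p - MvPolynomial.C PowerSeries.X}).map (Ideal.Quotient.mk (Iperp p))

/-- The congruence module `(J^⊥ + η)/((J^⊥)² + η)`, realized as the image of the ideal
`J^⊥ + η` in `T^⊥/((J^⊥)² + η)`. -/
noncomputable def congrMod (p : ℕ) [Fact p.Prime] (η : Ideal (Tperp p)) :
    Ideal (Tperp p ⧸ (Jperp p ^ 2 + η)) :=
  (Jperp p + η).map (Ideal.Quotient.mk (Jperp p ^ 2 + η))



section Helpers

variable {R S : Type*} [CommRing R] [CommRing S]

/-- Transport an ideal along a ring equivalence, as an additive equivalence of subtypes. -/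
noncomputable def idealAddEquivOfMap (e : R ≃+* S) (P : Ideal R) (Q : Ideal S)
    (h : P.map (e : R →+* S) = Q) : P ≃+ Q where
  toFun x := ⟨e x, h ▸ Ideal.mem_map_of_mem _ x.2⟩
  invFun y := ⟨e.symm y, by
    have h2 : Q.map (e.symm : S →+* R) = P := by
      rw [← h, Ideal.map_map]
      simp
    exact h2 ▸ Ideal.mem_map_of_mem _ y.2⟩
  left_inv x := by simp
  right_inv y := by simp
  map_add' x y := by simp

open MvPolynomial in
lemma sub_C_aeval_mem {σ : Type*} (v : σ → R) (f : MvPolynomial σ R) :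
    f - C (aeval v f) ∈ Ideal.span (Set.range fun i => (X i : MvPolynomial σ R) - C (v i)) := by
  induction f using MvPolynomial.induction_on with
  | C r => simp
  | add p q hp hq =>
      have h := Ideal.add_mem _ hp hq
      rw [show p + q - C ((aeval v) (p + q)) = (p - C (aeval v p)) + (q - C (aeval v q)) by
        rw [map_add, map_add]; ring]
      exact h
  | mul_X q i hq =>
      have h1 : (X i : MvPolynomial σ R) - C (v i) ∈
          Ideal.span (Set.range fun i => (X i : MvPolynomial σ R) - C (v i)) :=
        Ideal.subset_span ⟨i, rfl⟩
      have e1 : (C (aeval v (q * X i)) : MvPolynomial σ R) = C (aeval v q) * C (v i) := by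
        simp [map_mul]
      rw [e1, show q * X i - C (aeval v q) * C (v i)
          = q * (X i - C (v i)) + (q - C (aeval v q)) * C (v i) by ring]
      exact Ideal.add_mem _ (Ideal.mul_mem_left _ _ h1) (Ideal.mul_mem_right _ _ hq)

lemma range_fin_two {α : Type*} (f : Fin 2 → α) : Set.range f = {f 0, f 1} := by
  ext x
  constructor
  · rintro ⟨i, rfl⟩
    fin_cases i <;> simp
  · rintro (rfl | rfl) <;> exact ⟨_, rfl⟩

end Helpers

section Helpers2

open MvPolynomial

variable {R : Type*} [CommRing R]

/-- Evaluation at `(a, b)` followed by the quotient map `R → R ⧸ g`. -/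
noncomputable def psi (a b : R) (g : Ideal R) : MvPolynomial (Fin 2) R →+* R ⧸ g :=
  (Ideal.Quotient.mk g).comp ((aeval ![a, b] : MvPolynomial (Fin 2) R →ₐ[R] R) : MvPolynomial (Fin 2) R →+* R)

lemma psi_apply (a b : R) (g : Ideal R) (f : MvPolynomial (Fin 2) R) :
    psi a b g f = Ideal.Quotient.mk g (aeval ![a, b] f) := rfl

lemma psi_surjective (a b : R) (g : Ideal R) : Function.Surjective (psi a b g) := by
  intro x
  obtain ⟨r, rfl⟩ := Ideal.Quotient.mk_surjective x
  exact ⟨MvPolynomial.C r, by simp [psi_apply]⟩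

lemma ker_psi (a b : R) (g : Ideal R) (M : Ideal (MvPolynomial (Fin 2) R))
    (h1 : (X 0 : MvPolynomial (Fin 2) R) - C a ∈ M)
    (h1' : (X 1 : MvPolynomial (Fin 2) R) - C b ∈ M)
    (h2 : g.map (C : R →+* MvPolynomial (Fin 2) R) ≤ M)
    (h3 : M ≤ RingHom.ker (psi a b g)) :
    RingHom.ker (psi a b g) = M := by
  refine le_antisymm ?_ h3
  intro f hf
  rw [RingHom.mem_ker, psi_apply] at hf
  have hg : aeval ![a, b] f ∈ g := Ideal.Quotient.eq_zero_iff_mem.mp hf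
  have hs : f - C (aeval ![a, b] f) ∈ M := by
    refine SetLike.le_def.mp ?_ (sub_C_aeval_mem ![a, b] f)
    rw [Ideal.span_le, range_fin_two]
    intro x hx
    simp only [Set.mem_insert_iff, Set.mem_singleton_iff] at hx
    rcases hx with rfl | rfl
    · simpa using h1
    · simpa using h1'
  have := M.add_mem hs (h2 (Ideal.mem_map_of_mem _ hg))
  simpa using this

/-- The composite equivalence `(A ⧸ I) ⧸ L̄ ≃+* R ⧸ g`. -/
noncomputable def quotCongrEquiv (I L : Ideal (MvPolynomial (Fin 2) R)) (a b : R) (g : Ideal R)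
    (hker : RingHom.ker (psi a b g) = I ⊔ L) :
    ((MvPolynomial (Fin 2) R ⧸ I) ⧸ L.map (Ideal.Quotient.mk I)) ≃+* R ⧸ g :=
  (DoubleQuot.quotQuotEquivQuotSup I L).trans <|
    (Ideal.quotEquivOfEq hker.symm).trans
      (RingHom.quotientKerEquivOfSurjective (psi_surjective a b g))

lemma quotCongrEquiv_comp (I L : Ideal (MvPolynomial (Fin 2) R)) (a b : R) (g : Ideal R)
    (hker : RingHom.ker (psi a b g) = I ⊔ L) :
    ((quotCongrEquiv I L a b g hker : _ →+* _).comp (DoubleQuot.quotQuotMk I L)) = psi a b g := by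
  refine RingHom.ext fun f => ?_
  show quotCongrEquiv I L a b g hker (DoubleQuot.quotQuotMk I L f) = psi a b g f
  simp only [quotCongrEquiv, RingEquiv.trans_apply,
      DoubleQuot.quotQuotEquivQuotSup_quotQuotMk, Ideal.quotEquivOfEq_mk]
  exact RingHom.kerLift_mk (psi a b g) f

lemma map_quotCongrEquiv (I L : Ideal (MvPolynomial (Fin 2) R)) (a b : R) (g : Ideal R)
    (hker : RingHom.ker (psi a b g) = I ⊔ L) (N : Ideal (MvPolynomial (Fin 2) R)) :
    ((N.map (DoubleQuot.quotQuotMk I L)).map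
        ((quotCongrEquiv I L a b g hker : _ →+* _))) =
      (N.map ((aeval ![a, b] : MvPolynomial (Fin 2) R →ₐ[R] R) : MvPolynomial (Fin 2) R →+* R)).map (Ideal.Quotient.mk g) := by
  rw [Ideal.map_map, quotCongrEquiv_comp, psi, ← Ideal.map_map]

end Helpers2


section PS
variable {R : Type*} [CommRing R]

lemma C_dvd_iff_ps (r : R) (f : PowerSeries R) :
    (PowerSeries.C r) ∣ f ↔ ∀ n, r ∣ PowerSeries.coeff n f := by
  constructor
  · rintro ⟨g, rfl⟩ n
    exact ⟨PowerSeries.coeff n g, by simp⟩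
  · intro h
    refine ⟨PowerSeries.mk fun n => (h n).choose, ?_⟩
    ext n
    rw [PowerSeries.coeff_C_mul, PowerSeries.coeff_mk]
    exact (h n).choose_spec

lemma map_eq_cotangentIdeal (I : Ideal R) :
    I.map (Ideal.Quotient.mk (I ^ 2)) = I.cotangentIdeal := by
  ext x
  rw [Ideal.mem_map_iff_of_surjective _ Ideal.Quotient.mk_surjective]
  constructor
  · rintro ⟨y, hy, rfl⟩
    exact ⟨y, hy, rfl⟩
  · rintro ⟨y, hy, rfl⟩
    exact ⟨y, hy, rfl⟩

end PS

section Lam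
variable (p : ℕ) [Fact p.Prime]

local notation "Λ" => PowerSeries ℤ_[p]

lemma natCast_eq_C : ((p : ℕ) : Λ) = PowerSeries.C ((p : ℕ) : ℤ_[p]) := by
  simp

lemma p_ne_zero_Lam : ((p : ℕ) : Λ) ≠ 0 := by
  intro h
  apply_fun PowerSeries.constantCoeff at h
  rw [natCast_eq_C] at h
  simp only [PowerSeries.constantCoeff_C, map_zero] at h
  exact (Nat.cast_ne_zero (R := ℤ_[p])).mpr (Fact.out (p := p.Prime)).ne_zero h

lemma p_mem_max : ((p : ℕ) : ℤ_[p]) ∈ maximalIdeal ℤ_[p] := by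
  rw [PadicInt.maximalIdeal_eq_span_p]
  exact Ideal.mem_span_singleton_self _

lemma maximalIdeal_Lam :
    maximalIdeal Λ = Ideal.span {((p : ℕ) : Λ), PowerSeries.X} := by
  apply le_antisymm
  · intro f hf
    rw [IsLocalRing.mem_maximalIdeal, mem_nonunits_iff] at hf
    have h0 : ¬ IsUnit (PowerSeries.constantCoeff f) := fun h =>
      hf (PowerSeries.isUnit_iff_constantCoeff.mpr h)
    have hmem : PowerSeries.constantCoeff f ∈ maximalIdeal ℤ_[p] := h0
    rw [PadicInt.maximalIdeal_eq_span_p, Ideal.mem_span_singleton] at hmem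
    obtain ⟨c, hc⟩ := hmem
    have h1 : f - PowerSeries.C (PowerSeries.constantCoeff f) ∈
        Ideal.span {((p : ℕ) : Λ), PowerSeries.X} := by
      have : (PowerSeries.X : Λ) ∣ f - PowerSeries.C (PowerSeries.constantCoeff f) := by
        rw [PowerSeries.X_dvd_iff]
        simp
      obtain ⟨u, hu⟩ := this
      rw [hu]
      exact Ideal.mul_mem_right _ _ (Ideal.subset_span (by simp))
    have h2 : (PowerSeries.C (PowerSeries.constantCoeff f)) ∈
        Ideal.span {((p : ℕ) : Λ), PowerSeries.X} := by
      rw [hc, map_mul, natCast_eq_C]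
      exact Ideal.mul_mem_right _ _ (Ideal.subset_span (by simp [← natCast_eq_C]))
    simpa using add_mem h1 h2
  · rw [Ideal.span_le]
    rintro x hx
    simp only [Set.mem_insert_iff, Set.mem_singleton_iff] at hx
    rcases hx with rfl | rfl
    · show _ ∈ maximalIdeal Λ
      rw [IsLocalRing.mem_maximalIdeal, mem_nonunits_iff]
      intro h
      rw [PowerSeries.isUnit_iff_constantCoeff, natCast_eq_C] at h
      simp only [PowerSeries.constantCoeff_C] at h
      exact (IsLocalRing.mem_maximalIdeal _).mp (p_mem_max p) h
    · show _ ∈ maximalIdeal Λ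
      rw [IsLocalRing.mem_maximalIdeal, mem_nonunits_iff]
      intro h
      rw [PowerSeries.isUnit_iff_constantCoeff] at h
      simp at h

lemma p_dvd_iff_Lam (u : Λ) :
    ((p : ℕ) : Λ) ∣ u ↔ ∀ n, PadicInt.toZMod (PowerSeries.coeff n u) = 0 := by
  rw [natCast_eq_C, C_dvd_iff_ps]
  refine forall_congr' fun n => ?_
  rw [← Ideal.mem_span_singleton, ← PadicInt.maximalIdeal_eq_span_p, ← PadicInt.ker_toZMod,
    RingHom.mem_ker]

end Lam

section AddEquivs
variable (p : ℕ) [Fact p.Prime]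

local notation "Λ" => PowerSeries ℤ_[p]

open PowerSeries

/-- `(X)/(X²) ≃+ ℤ_p`. -/
noncomputable def addEquivCase1 :
    ↥((Ideal.span {(X : Λ)}).map
        (Ideal.Quotient.mk (Ideal.span {(X : Λ) * X}))) ≃+ ℤ_[p] := by
  refine (AddEquiv.ofBijective
    ({ toFun := fun c => ⟨Ideal.Quotient.mk _ (C c * X), Ideal.mem_map_of_mem _
        (Ideal.mul_mem_left _ _ (Ideal.subset_span rfl))⟩
       map_zero' := by ext; simp
       map_add' := fun c d => by
         ext
         show Ideal.Quotient.mk _ _ = Ideal.Quotient.mk _ _ + Ideal.Quotient.mk _ _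
         rw [← map_add, map_add, add_mul] } : ℤ_[p] →+ _) ⟨?_, ?_⟩).symm
  · intro c d h
    have h2 : C c * X - C d * X ∈ Ideal.span {(X : Λ) * X} := by
      rw [← Ideal.Quotient.mk_eq_mk_iff_sub_mem]
      exact congrArg Subtype.val h
    rw [Ideal.mem_span_singleton] at h2
    obtain ⟨u, hu⟩ := h2
    have hX : (C c - C d) * X = (X * u) * X := by
      rw [show (X * u) * X = X * X * u by ring, ← hu]; ring
    have h3 : C c - C d = X * u := mul_right_cancel₀ X_ne_zero hX
    have := congrArg (constantCoeff) h3
    simpa [sub_eq_zero] using this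
  · rintro ⟨q, hq⟩
    obtain ⟨f, hf, rfl⟩ := (Ideal.mem_map_iff_of_surjective _ Ideal.Quotient.mk_surjective).mp hq
    rw [Ideal.mem_span_singleton] at hf
    obtain ⟨u, rfl⟩ := hf
    refine ⟨constantCoeff u, ?_⟩
    ext
    show Ideal.Quotient.mk _ _ = Ideal.Quotient.mk _ _
    rw [Ideal.Quotient.mk_eq_mk_iff_sub_mem, Ideal.mem_span_singleton]
    have hdvd : (X : Λ) ∣ (C (constantCoeff u) - u) := by
      rw [X_dvd_iff]; simp
    obtain ⟨w, hw⟩ := hdvd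
    exact ⟨w, by rw [show C (constantCoeff u) * X - X * u
      = (C (constantCoeff u) - u) * X by ring, hw]; ring⟩

/-- The coefficientwise lift of a power series over `ZMod p`. -/
noncomputable def liftZ (f : PowerSeries (ZMod p)) : Λ :=
  PowerSeries.mk fun n => ((PowerSeries.coeff n f).val : ℤ_[p])

lemma toZMod_liftZ (f : PowerSeries (ZMod p)) (n : ℕ) :
    PadicInt.toZMod (coeff n (liftZ p f)) = coeff n f := by
  rw [liftZ, coeff_mk, map_natCast]
  exact ZMod.natCast_rightInverse _

/-- `(p)/(p²) ≃+ 𝔽_p⟦X⟧`. -/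
noncomputable def addEquivCase2 :
    ↥((Ideal.span {((p : ℕ) : Λ)}).map
        (Ideal.Quotient.mk (Ideal.span {((p : ℕ) : Λ) * ((p : ℕ) : Λ)}))) ≃+
      PowerSeries (ZMod p) := by
  have key : ∀ u v : Λ, (∀ n, PadicInt.toZMod (coeff n (u - v)) = 0) →
      Ideal.Quotient.mk (Ideal.span {((p : ℕ) : Λ) * ((p : ℕ) : Λ)}) (((p : ℕ) : Λ) * u)
      = Ideal.Quotient.mk _ (((p : ℕ) : Λ) * v) := by
    intro u v h
    rw [Ideal.Quotient.mk_eq_mk_iff_sub_mem, Ideal.mem_span_singleton,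
      show ((p : ℕ) : Λ) * u - ((p : ℕ) : Λ) * v = ((p : ℕ) : Λ) * (u - v) by ring,
      mul_dvd_mul_iff_left (p_ne_zero_Lam p), p_dvd_iff_Lam]
    exact h
  refine (AddEquiv.ofBijective
    ({ toFun := fun f => ⟨Ideal.Quotient.mk _ (((p : ℕ) : Λ) * liftZ p f),
        Ideal.mem_map_of_mem _ (Ideal.mul_mem_right _ _ (Ideal.subset_span rfl))⟩
       map_zero' := by
         ext
         show Ideal.Quotient.mk _ _ = Ideal.Quotient.mk _ 0
         rw [show (0 : Λ) = ((p : ℕ) : Λ) * 0 by ring]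
         exact key _ _ (by intro n; simp [toZMod_liftZ])
       map_add' := fun f g => by
         ext
         show Ideal.Quotient.mk _ _ = Ideal.Quotient.mk _ _ + Ideal.Quotient.mk _ _
         rw [← map_add, ← mul_add]
         exact key _ _ (by intro n; simp [toZMod_liftZ]) } : PowerSeries (ZMod p) →+ _)
    ⟨?_, ?_⟩).symm
  · intro f g h
    have h2 : ((p : ℕ) : Λ) * liftZ p f - ((p : ℕ) : Λ) * liftZ p g ∈
        Ideal.span {((p : ℕ) : Λ) * ((p : ℕ) : Λ)} := by
      rw [← Ideal.Quotient.mk_eq_mk_iff_sub_mem]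
      exact congrArg Subtype.val h
    rw [Ideal.mem_span_singleton,
      show ((p : ℕ) : Λ) * liftZ p f - ((p : ℕ) : Λ) * liftZ p g
        = ((p : ℕ) : Λ) * (liftZ p f - liftZ p g) by ring,
      mul_dvd_mul_iff_left (p_ne_zero_Lam p), p_dvd_iff_Lam] at h2
    ext n
    have := h2 n
    rw [map_sub, map_sub, toZMod_liftZ, toZMod_liftZ, sub_eq_zero] at this
    exact this
  · rintro ⟨q, hq⟩
    obtain ⟨f, hf, rfl⟩ := (Ideal.mem_map_iff_of_surjective _ Ideal.Quotient.mk_surjective).mp hq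
    rw [Ideal.mem_span_singleton'] at hf
    obtain ⟨u, rfl⟩ := hf
    refine ⟨PowerSeries.map PadicInt.toZMod u, ?_⟩
    ext
    show Ideal.Quotient.mk _ _ = Ideal.Quotient.mk _ (u * ((p : ℕ) : Λ))
    rw [show u * ((p : ℕ) : Λ) = ((p : ℕ) : Λ) * u by ring]
    refine key _ _ ?_
    intro n
    rw [map_sub, map_sub, toZMod_liftZ, PowerSeries.coeff_map, sub_eq_zero]

end AddEquivs

section Cases

open MvPolynomial

lemma sq_span_pair {R : Type*} [CommRing R] (a b : R) :
    (Ideal.span {a, b}) ^ 2 = Ideal.span {a * a, a * b, b * b} := by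
  rw [pow_two, Ideal.span_pair_mul_span_pair, mul_comm b a]
  congr 1
  ext x
  simp only [Set.mem_insert_iff, Set.mem_singleton_iff]
  tauto

variable (p : ℕ) [Fact p.Prime]

lemma hm2_Lam : (maximalIdeal (Lam13 p)) ^ 2 =
    Ideal.span {((p : ℕ) : Lam13 p) * ((p : ℕ) : Lam13 p),
      ((p : ℕ) : Lam13 p) * PowerSeries.X, (PowerSeries.X : Lam13 p) * PowerSeries.X} := by
  rw [maximalIdeal_Lam, sq_span_pair]

/-! ### Kernel computations -/

lemma hker0 : RingHom.ker (psi (0 : Lam13 p) (0 : Lam13 p)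
      (Ideal.span {(p : Lam13 p) * PowerSeries.X})) =
    Iperp p ⊔ Ideal.span {y13 p, z13 p} := by
  refine ker_psi _ _ _ _ ?_ ?_ ?_ ?_
  · rw [map_zero, sub_zero]
    exact Ideal.mem_sup_right (Ideal.subset_span (Set.mem_insert _ _))
  · rw [map_zero, sub_zero]
    exact Ideal.mem_sup_right (Ideal.subset_span (Set.mem_insert_of_mem _ rfl))
  · rw [Ideal.map_span, Set.image_singleton, Ideal.span_le]
    intro x hx
    rw [Set.mem_singleton_iff] at hx
    subst hx
    rw [map_mul]
    have key : (C ((p : Lam13 p)) : MvPolynomial (Fin 2) (Lam13 p)) * C PowerSeries.X =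
        ((y13 p - C ((p : Lam13 p))) * (z13 p - C PowerSeries.X) - y13 p * z13 p)
          + C PowerSeries.X * y13 p + C ((p : Lam13 p)) * z13 p := by ring
    rw [key]
    refine add_mem (add_mem (sub_mem ?_ ?_) ?_) ?_
    · exact Ideal.mem_sup_left (Ideal.subset_span (by simp))
    · exact Ideal.mem_sup_right (Ideal.mul_mem_right _ _ (Ideal.subset_span (Set.mem_insert _ _)))
    · exact Ideal.mem_sup_right (Ideal.mul_mem_left _ _ (Ideal.subset_span (Set.mem_insert _ _)))
    · exact Ideal.mem_sup_right (Ideal.mul_mem_left _ _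
        (Ideal.subset_span (Set.mem_insert_of_mem _ rfl)))
  · refine sup_le ?_ ?_
    · rw [Iperp, Ideal.span_le]
      intro x hx
      simp only [Set.mem_insert_iff, Set.mem_singleton_iff] at hx
      rcases hx with rfl | rfl | rfl <;>
      · rw [SetLike.mem_coe, RingHom.mem_ker, psi_apply]
        simp
    · rw [Ideal.span_le]
      intro x hx
      simp only [Set.mem_insert_iff, Set.mem_singleton_iff] at hx
      rcases hx with rfl | rfl <;>
      · rw [SetLike.mem_coe, RingHom.mem_ker, psi_apply]
        simp

lemma hker1 : RingHom.ker (psi (0 : Lam13 p) (PowerSeries.X : Lam13 p)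
      (Ideal.span {(PowerSeries.X : Lam13 p) * PowerSeries.X})) =
    Iperp p ⊔ (Ideal.span {y13 p, z13 p} ^ 2 ⊔
      Ideal.span {y13 p, z13 p - C PowerSeries.X}) := by
  refine ker_psi _ _ _ _ ?_ ?_ ?_ ?_
  · rw [map_zero, sub_zero]
    exact Ideal.mem_sup_right (Ideal.mem_sup_right (Ideal.subset_span (Set.mem_insert _ _)))
  · exact Ideal.mem_sup_right (Ideal.mem_sup_right
      (Ideal.subset_span (Set.mem_insert_of_mem _ rfl)))
  · rw [Ideal.map_span, Set.image_singleton, Ideal.span_le]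
    intro x hx
    rw [Set.mem_singleton_iff] at hx
    subst hx
    rw [map_mul]
    have key : (C (PowerSeries.X : Lam13 p) : MvPolynomial (Fin 2) (Lam13 p)) * C PowerSeries.X =
        z13 p * z13 p - (z13 p + C PowerSeries.X) * (z13 p - C PowerSeries.X) := by ring
    rw [key]
    refine sub_mem ?_ ?_
    · refine Ideal.mem_sup_right (Ideal.mem_sup_left ?_)
      rw [sq_span_pair]
      exact Ideal.subset_span (by simp)
    · exact Ideal.mem_sup_right (Ideal.mem_sup_right (Ideal.mul_mem_left _ _
        (Ideal.subset_span (Set.mem_insert_of_mem _ rfl))))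
  · refine sup_le ?_ (sup_le ?_ ?_)
    · rw [Iperp, Ideal.span_le]
      intro x hx
      simp only [Set.mem_insert_iff, Set.mem_singleton_iff] at hx
      rcases hx with rfl | rfl | rfl <;>
      · rw [SetLike.mem_coe, RingHom.mem_ker, psi_apply]
        simp
    · rw [sq_span_pair, Ideal.span_le]
      intro x hx
      simp only [Set.mem_insert_iff, Set.mem_singleton_iff] at hx
      rcases hx with rfl | rfl | rfl <;>
      · rw [SetLike.mem_coe, RingHom.mem_ker, psi_apply]
        simp
    · rw [Ideal.span_le]
      intro x hx
      simp only [Set.mem_insert_iff, Set.mem_singleton_iff] at hx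
      rcases hx with rfl | rfl <;>
      · rw [SetLike.mem_coe, RingHom.mem_ker, psi_apply]
        simp

lemma hker2 : RingHom.ker (psi ((p : Lam13 p)) (0 : Lam13 p)
      (Ideal.span {(p : Lam13 p) * (p : Lam13 p)})) =
    Iperp p ⊔ (Ideal.span {y13 p, z13 p} ^ 2 ⊔
      Ideal.span {y13 p - C ((p : Lam13 p)), z13 p}) := by
  refine ker_psi _ _ _ _ ?_ ?_ ?_ ?_
  · exact Ideal.mem_sup_right (Ideal.mem_sup_right (Ideal.subset_span (Set.mem_insert _ _)))
  · rw [map_zero, sub_zero]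
    exact Ideal.mem_sup_right (Ideal.mem_sup_right
      (Ideal.subset_span (Set.mem_insert_of_mem _ rfl)))
  · rw [Ideal.map_span, Set.image_singleton, Ideal.span_le]
    intro x hx
    rw [Set.mem_singleton_iff] at hx
    subst hx
    rw [map_mul]
    have key : (C ((p : Lam13 p)) : MvPolynomial (Fin 2) (Lam13 p)) * C ((p : Lam13 p)) =
        y13 p * y13 p - (y13 p + C ((p : Lam13 p))) * (y13 p - C ((p : Lam13 p))) := by ring
    rw [key]
    refine sub_mem ?_ ?_
    · refine Ideal.mem_sup_right (Ideal.mem_sup_left ?_)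
      rw [sq_span_pair]
      exact Ideal.subset_span (by simp)
    · exact Ideal.mem_sup_right (Ideal.mem_sup_right (Ideal.mul_mem_left _ _
        (Ideal.subset_span (Set.mem_insert _ _))))
  · refine sup_le ?_ (sup_le ?_ ?_)
    · rw [Iperp, Ideal.span_le]
      intro x hx
      simp only [Set.mem_insert_iff, Set.mem_singleton_iff] at hx
      rcases hx with rfl | rfl | rfl <;>
      · rw [SetLike.mem_coe, RingHom.mem_ker, psi_apply]
        simp
    · rw [sq_span_pair, Ideal.span_le]
      intro x hx
      simp only [Set.mem_insert_iff, Set.mem_singleton_iff] at hx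
      rcases hx with rfl | rfl | rfl <;>
      · rw [SetLike.mem_coe, RingHom.mem_ker, psi_apply]
        simp
    · rw [Ideal.span_le]
      intro x hx
      simp only [Set.mem_insert_iff, Set.mem_singleton_iff] at hx
      rcases hx with rfl | rfl <;>
      · rw [SetLike.mem_coe, RingHom.mem_ker, psi_apply]
        simp

lemma hker3 : RingHom.ker (psi ((p : Lam13 p)) (PowerSeries.X : Lam13 p)
      ((maximalIdeal (Lam13 p)) ^ 2)) =
    Iperp p ⊔ (Ideal.span {y13 p, z13 p} ^ 2 ⊔
      Ideal.span {y13 p - C ((p : Lam13 p)), z13 p - C PowerSeries.X}) := by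
  refine ker_psi _ _ _ _ ?_ ?_ ?_ ?_
  · exact Ideal.mem_sup_right (Ideal.mem_sup_right (Ideal.subset_span (Set.mem_insert _ _)))
  · exact Ideal.mem_sup_right (Ideal.mem_sup_right
      (Ideal.subset_span (Set.mem_insert_of_mem _ rfl)))
  · rw [hm2_Lam, Ideal.map_span, Set.image_insert_eq, Set.image_insert_eq, Set.image_singleton,
      Ideal.span_le]
    intro x hx
    simp only [Set.mem_insert_iff, Set.mem_singleton_iff] at hx
    have hy : y13 p - C ((p : Lam13 p)) ∈ Iperp p ⊔ (Ideal.span {y13 p, z13 p} ^ 2 ⊔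
        Ideal.span {y13 p - C ((p : Lam13 p)), z13 p - C PowerSeries.X}) :=
      Ideal.mem_sup_right (Ideal.mem_sup_right (Ideal.subset_span (Set.mem_insert _ _)))
    have hz : z13 p - C PowerSeries.X ∈ Iperp p ⊔ (Ideal.span {y13 p, z13 p} ^ 2 ⊔
        Ideal.span {y13 p - C ((p : Lam13 p)), z13 p - C PowerSeries.X}) :=
      Ideal.mem_sup_right (Ideal.mem_sup_right
        (Ideal.subset_span (Set.mem_insert_of_mem _ rfl)))
    have hs2 : ∀ w ∈ Ideal.span {y13 p * y13 p, y13 p * z13 p, z13 p * z13 p},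
        w ∈ Iperp p ⊔ (Ideal.span {y13 p, z13 p} ^ 2 ⊔
        Ideal.span {y13 p - C ((p : Lam13 p)), z13 p - C PowerSeries.X}) := by
      intro w hw
      refine Ideal.mem_sup_right (Ideal.mem_sup_left ?_)
      rw [sq_span_pair]
      exact hw
    rcases hx with rfl | rfl | rfl
    · rw [map_mul]
      have key : (C ((p : Lam13 p)) : MvPolynomial (Fin 2) (Lam13 p)) * C ((p : Lam13 p)) =
          y13 p * y13 p - (y13 p + C ((p : Lam13 p))) * (y13 p - C ((p : Lam13 p))) := by ring
      rw [key]
      exact sub_mem (hs2 _ (Ideal.subset_span (by simp))) (Ideal.mul_mem_left _ _ hy)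
    · rw [map_mul]
      have key : (C ((p : Lam13 p)) : MvPolynomial (Fin 2) (Lam13 p)) * C PowerSeries.X =
          y13 p * z13 p - y13 p * (z13 p - C PowerSeries.X)
            - C PowerSeries.X * (y13 p - C ((p : Lam13 p))) := by ring
      rw [key]
      exact sub_mem (sub_mem (hs2 _ (Ideal.subset_span (by simp)))
        (Ideal.mul_mem_left _ _ hz)) (Ideal.mul_mem_left _ _ hy)
    · rw [map_mul]
      have key : (C (PowerSeries.X : Lam13 p) : MvPolynomial (Fin 2) (Lam13 p)) * C PowerSeries.X =
          z13 p * z13 p - (z13 p + C PowerSeries.X) * (z13 p - C PowerSeries.X) := by ring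
      rw [key]
      exact sub_mem (hs2 _ (Ideal.subset_span (by simp))) (Ideal.mul_mem_left _ _ hz)
  · refine sup_le ?_ (sup_le ?_ ?_)
    · rw [Iperp, Ideal.span_le]
      intro x hx
      simp only [Set.mem_insert_iff, Set.mem_singleton_iff] at hx
      rcases hx with rfl | rfl | rfl <;>
      · rw [SetLike.mem_coe, RingHom.mem_ker, psi_apply]
        simp
    · rw [sq_span_pair, Ideal.span_le]
      intro x hx
      simp only [Set.mem_insert_iff, Set.mem_singleton_iff] at hx
      rcases hx with rfl | rfl | rfl <;>
      · rw [SetLike.mem_coe, RingHom.mem_ker, psi_apply]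
        rw [Ideal.Quotient.eq_zero_iff_mem, hm2_Lam]
        refine Ideal.subset_span ?_
        simp
    · rw [Ideal.span_le]
      intro x hx
      simp only [Set.mem_insert_iff, Set.mem_singleton_iff] at hx
      rcases hx with rfl | rfl <;>
      · rw [SetLike.mem_coe, RingHom.mem_ker, psi_apply]
        simp

/-! ### Images of `J + η` under evaluation -/

lemma haev1 : (Ideal.span {y13 p, z13 p} ⊔ Ideal.span {y13 p, z13 p - C PowerSeries.X}).map
      ((aeval ![(0 : Lam13 p), PowerSeries.X] :
          MvPolynomial (Fin 2) (Lam13 p) →ₐ[Lam13 p] Lam13 p) :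
        MvPolynomial (Fin 2) (Lam13 p) →+* Lam13 p) =
    Ideal.span {(PowerSeries.X : Lam13 p)} := by
  apply le_antisymm
  · rw [Ideal.map_le_iff_le_comap]
    refine sup_le ?_ ?_ <;> rw [Ideal.span_le] <;> intro x hx <;>
      simp only [Set.mem_insert_iff, Set.mem_singleton_iff] at hx <;>
      rcases hx with rfl | rfl <;>
      rw [SetLike.mem_coe, Ideal.mem_comap] <;>
      simp only [RingHom.coe_coe, map_sub, aeval_X, aeval_C, Matrix.cons_val_zero,
        Matrix.cons_val_one, Matrix.head_cons, Algebra.algebraMap_self_apply, RingHom.id_apply, sub_self]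
    · exact zero_mem _
    · exact Ideal.subset_span rfl
    · exact zero_mem _
    · exact zero_mem _
  · rw [Ideal.span_le]
    intro x hx
    rw [Set.mem_singleton_iff] at hx
    subst hx
    have hXz : ((aeval ![(0 : Lam13 p), PowerSeries.X] :
        MvPolynomial (Fin 2) (Lam13 p) →ₐ[Lam13 p] Lam13 p) :
        MvPolynomial (Fin 2) (Lam13 p) →+* Lam13 p) (z13 p) = PowerSeries.X := by simp
    have hm := Ideal.mem_map_of_mem ((aeval ![(0 : Lam13 p), PowerSeries.X] :
        MvPolynomial (Fin 2) (Lam13 p) →ₐ[Lam13 p] Lam13 p) :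
        MvPolynomial (Fin 2) (Lam13 p) →+* Lam13 p)
      (Ideal.mem_sup_left (S := Ideal.span {y13 p, z13 p})
        (T := Ideal.span {y13 p, z13 p - C PowerSeries.X})
        (Ideal.subset_span (Set.mem_insert_of_mem _ rfl)))
    rw [hXz] at hm
    exact hm

lemma haev2 : (Ideal.span {y13 p, z13 p} ⊔
      Ideal.span {y13 p - C ((p : Lam13 p)), z13 p}).map
      ((aeval ![(p : Lam13 p), (0 : Lam13 p)] :
          MvPolynomial (Fin 2) (Lam13 p) →ₐ[Lam13 p] Lam13 p) :
        MvPolynomial (Fin 2) (Lam13 p) →+* Lam13 p) =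
    Ideal.span {((p : Lam13 p))} := by
  apply le_antisymm
  · rw [Ideal.map_le_iff_le_comap]
    refine sup_le ?_ ?_ <;> rw [Ideal.span_le] <;> intro x hx <;>
      simp only [Set.mem_insert_iff, Set.mem_singleton_iff] at hx <;>
      rcases hx with rfl | rfl <;>
      rw [SetLike.mem_coe, Ideal.mem_comap] <;>
      simp only [RingHom.coe_coe, map_sub, aeval_X, aeval_C, Matrix.cons_val_zero,
        Matrix.cons_val_one, Matrix.head_cons, Algebra.algebraMap_self_apply, RingHom.id_apply, sub_self]
    · exact Ideal.subset_span rfl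
    · exact zero_mem _
    · exact zero_mem _
    · exact zero_mem _
  · rw [Ideal.span_le]
    intro x hx
    rw [Set.mem_singleton_iff] at hx
    subst hx
    have hXz : ((aeval ![(p : Lam13 p), (0 : Lam13 p)] :
        MvPolynomial (Fin 2) (Lam13 p) →ₐ[Lam13 p] Lam13 p) :
        MvPolynomial (Fin 2) (Lam13 p) →+* Lam13 p) (y13 p) = ((p : Lam13 p)) := by simp
    have hm := Ideal.mem_map_of_mem ((aeval ![(p : Lam13 p), (0 : Lam13 p)] :
        MvPolynomial (Fin 2) (Lam13 p) →ₐ[Lam13 p] Lam13 p) :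
        MvPolynomial (Fin 2) (Lam13 p) →+* Lam13 p)
      (Ideal.mem_sup_left (S := Ideal.span {y13 p, z13 p})
        (T := Ideal.span {y13 p - C ((p : Lam13 p)), z13 p})
        (Ideal.subset_span (Set.mem_insert _ _)))
    rw [hXz] at hm
    exact hm

lemma haev3 : (Ideal.span {y13 p, z13 p} ⊔
      Ideal.span {y13 p - C ((p : Lam13 p)), z13 p - C PowerSeries.X}).map
      ((aeval ![(p : Lam13 p), PowerSeries.X] :
          MvPolynomial (Fin 2) (Lam13 p) →ₐ[Lam13 p] Lam13 p) :
        MvPolynomial (Fin 2) (Lam13 p) →+* Lam13 p) =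
    maximalIdeal (Lam13 p) := by
  rw [maximalIdeal_Lam]
  apply le_antisymm
  · rw [Ideal.map_le_iff_le_comap]
    refine sup_le ?_ ?_ <;> rw [Ideal.span_le] <;> intro x hx <;>
      simp only [Set.mem_insert_iff, Set.mem_singleton_iff] at hx <;>
      rcases hx with rfl | rfl <;>
      rw [SetLike.mem_coe, Ideal.mem_comap] <;>
      simp only [RingHom.coe_coe, map_sub, aeval_X, aeval_C, Matrix.cons_val_zero,
        Matrix.cons_val_one, Matrix.head_cons, Algebra.algebraMap_self_apply, RingHom.id_apply, sub_self]
    · exact Ideal.subset_span (Set.mem_insert _ _)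
    · exact Ideal.subset_span (Set.mem_insert_of_mem _ rfl)
    · exact zero_mem _
    · exact zero_mem _
  · rw [Ideal.span_le]
    intro x hx
    simp only [Set.mem_insert_iff, Set.mem_singleton_iff] at hx
    rcases hx with rfl | rfl
    · have hXz : ((aeval ![(p : Lam13 p), PowerSeries.X] :
          MvPolynomial (Fin 2) (Lam13 p) →ₐ[Lam13 p] Lam13 p) :
          MvPolynomial (Fin 2) (Lam13 p) →+* Lam13 p) (y13 p) = ((p : Lam13 p)) := by simp
      have hm := Ideal.mem_map_of_mem ((aeval ![(p : Lam13 p), PowerSeries.X] :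
          MvPolynomial (Fin 2) (Lam13 p) →ₐ[Lam13 p] Lam13 p) :
          MvPolynomial (Fin 2) (Lam13 p) →+* Lam13 p)
        (Ideal.mem_sup_left (S := Ideal.span {y13 p, z13 p})
          (T := Ideal.span {y13 p - C ((p : Lam13 p)), z13 p - C PowerSeries.X})
          (Ideal.subset_span (Set.mem_insert _ _)))
      rw [hXz] at hm
      exact hm
    · have hXz : ((aeval ![(p : Lam13 p), PowerSeries.X] :
          MvPolynomial (Fin 2) (Lam13 p) →ₐ[Lam13 p] Lam13 p) :
          MvPolynomial (Fin 2) (Lam13 p) →+* Lam13 p) (z13 p) = PowerSeries.X := by simp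
      have hm := Ideal.mem_map_of_mem ((aeval ![(p : Lam13 p), PowerSeries.X] :
          MvPolynomial (Fin 2) (Lam13 p) →ₐ[Lam13 p] Lam13 p) :
          MvPolynomial (Fin 2) (Lam13 p) →+* Lam13 p)
        (Ideal.mem_sup_left (S := Ideal.span {y13 p, z13 p})
          (T := Ideal.span {y13 p - C ((p : Lam13 p)), z13 p - C PowerSeries.X})
          (Ideal.subset_span (Set.mem_insert_of_mem _ rfl)))
      rw [hXz] at hm
      exact hm

end Cases

section Final

open MvPolynomial in
lemma map_full {R : Type*} [CommRing R] (I L : Ideal (MvPolynomial (Fin 2) R)) (a b : R)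
    (g : Ideal R) (hker : RingHom.ker (psi a b g) = I ⊔ L)
    (J2 : Ideal ((MvPolynomial (Fin 2) R) ⧸ I)) (hL : J2 = L.map (Ideal.Quotient.mk I))
    (N : Ideal (MvPolynomial (Fin 2) R)) (J1 : Ideal ((MvPolynomial (Fin 2) R) ⧸ I))
    (hN : J1 = N.map (Ideal.Quotient.mk I)) (h' : Ideal R)
    (haev : N.map ((aeval ![a, b] : MvPolynomial (Fin 2) R →ₐ[R] R) :
      MvPolynomial (Fin 2) R →+* R) = h') :
    (J1.map (Ideal.Quotient.mk J2)).map
      ((((Ideal.quotEquivOfEq hL).trans (quotCongrEquiv I L a b g hker)) :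
        (MvPolynomial (Fin 2) R ⧸ I) ⧸ J2 ≃+* R ⧸ g) : _ →+* _) = h'.map (Ideal.Quotient.mk g) := by
  subst hN haev
  rw [Ideal.map_map, Ideal.map_map]
  have hhom : (((((Ideal.quotEquivOfEq hL).trans (quotCongrEquiv I L a b g hker)) :
      (MvPolynomial (Fin 2) R ⧸ I) ⧸ J2 ≃+* R ⧸ g) : _ →+* _).comp
        (Ideal.Quotient.mk J2)).comp (Ideal.Quotient.mk I) = psi a b g := by
    refine RingHom.ext fun x => ?_
    have h2 := RingHom.congr_fun (quotCongrEquiv_comp I L a b g hker) x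
    show (quotCongrEquiv I L a b g hker)
      ((Ideal.quotEquivOfEq hL) (Ideal.Quotient.mk J2 (Ideal.Quotient.mk I x))) = _
    rw [Ideal.quotEquivOfEq_mk]
    exact h2
  rw [hhom]
  show Ideal.map ((Ideal.Quotient.mk g).comp
    ((aeval ![a, b] : MvPolynomial (Fin 2) R →ₐ[R] R) : MvPolynomial (Fin 2) R →+* R)) N = _
  rw [← Ideal.map_map]

end Final


/-- For `T^⊥ = Λ[y,z]/(y(y−p), z(z−X), (y−p)(z−X))` and `J^⊥` the image of
`(y, z)`: `T^⊥/J^⊥ ≅ Λ/(pX)`, and the congruence modules at the three minimal primes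
`η₁ = (y, z−X)`, `η₂ = (y−p, z)`, `η₃ = (y−p, z−X)` satisfy
`(J^⊥+η₁)/((J^⊥)²+η₁) ≅ ℤ_p`, `(J^⊥+η₂)/((J^⊥)²+η₂) ≅ 𝔽_p⟦X⟧`, and
`(J^⊥+η₃)/((J^⊥)²+η₃) ≅ m_Λ/m_Λ²`. -/
theorem Tperp_congruence_modules (p : ℕ) [Fact p.Prime] :
    Nonempty ((Tperp p ⧸ Jperp p) ≃+* (Lam13 p ⧸
      Ideal.span {(p : Lam13 p) * PowerSeries.X})) ∧
    Nonempty (↥(congrMod p (eta1 p)) ≃+ ℤ_[p]) ∧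
    Nonempty (↥(congrMod p (eta2 p)) ≃+ PowerSeries (ZMod p)) ∧
    Nonempty (↥(congrMod p (eta3 p)) ≃+ (maximalIdeal (Lam13 p)).Cotangent) := by
  refine ⟨⟨?_⟩, ⟨?_⟩, ⟨?_⟩, ⟨?_⟩⟩
  · exact (Ideal.quotEquivOfEq (rfl : Jperp p = (Ideal.span {y13 p, z13 p}).map
      (Ideal.Quotient.mk (Iperp p)))).trans
      (quotCongrEquiv (Iperp p) (Ideal.span {y13 p, z13 p}) (0 : Lam13 p) (0 : Lam13 p) _ (hker0 p))
  · -- η₁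
    have hL : Jperp p ^ 2 + eta1 p = (Ideal.span {y13 p, z13 p} ^ 2 ⊔
        Ideal.span {y13 p, z13 p - MvPolynomial.C PowerSeries.X}).map
          (Ideal.Quotient.mk (Iperp p)) := by
      rw [Ideal.add_eq_sup, Ideal.map_sup, Ideal.map_pow]
      rfl
    have hN : Jperp p + eta1 p = (Ideal.span {y13 p, z13 p} ⊔
        Ideal.span {y13 p, z13 p - MvPolynomial.C PowerSeries.X}).map
          (Ideal.Quotient.mk (Iperp p)) := by
      rw [Ideal.add_eq_sup, Ideal.map_sup]
      rfl
    have hmap := map_full (Iperp p) _ (0 : Lam13 p) PowerSeries.X _ (hker1 p) _ hL _ _ hN _ (haev1 p)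
    exact (idealAddEquivOfMap _ _ _ hmap).trans (addEquivCase1 p)
  · -- η₂
    have hL : Jperp p ^ 2 + eta2 p = (Ideal.span {y13 p, z13 p} ^ 2 ⊔
        Ideal.span {y13 p - MvPolynomial.C ((p : Lam13 p)), z13 p}).map
          (Ideal.Quotient.mk (Iperp p)) := by
      rw [Ideal.add_eq_sup, Ideal.map_sup, Ideal.map_pow]
      rfl
    have hN : Jperp p + eta2 p = (Ideal.span {y13 p, z13 p} ⊔
        Ideal.span {y13 p - MvPolynomial.C ((p : Lam13 p)), z13 p}).map
          (Ideal.Quotient.mk (Iperp p)) := by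
      rw [Ideal.add_eq_sup, Ideal.map_sup]
      rfl
    have hmap := map_full (Iperp p) _ ((p : Lam13 p)) (0 : Lam13 p) _ (hker2 p) _ hL _ _ hN _ (haev2 p)
    exact (idealAddEquivOfMap _ _ _ hmap).trans (addEquivCase2 p)
  · -- η₃
    have hL : Jperp p ^ 2 + eta3 p = (Ideal.span {y13 p, z13 p} ^ 2 ⊔
        Ideal.span {y13 p - MvPolynomial.C ((p : Lam13 p)),
          z13 p - MvPolynomial.C PowerSeries.X}).map (Ideal.Quotient.mk (Iperp p)) := by
      rw [Ideal.add_eq_sup, Ideal.map_sup, Ideal.map_pow]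
      rfl
    have hN : Jperp p + eta3 p = (Ideal.span {y13 p, z13 p} ⊔
        Ideal.span {y13 p - MvPolynomial.C ((p : Lam13 p)),
          z13 p - MvPolynomial.C PowerSeries.X}).map (Ideal.Quotient.mk (Iperp p)) := by
      rw [Ideal.add_eq_sup, Ideal.map_sup]
      rfl
    have hmap := map_full (Iperp p) _ ((p : Lam13 p)) PowerSeries.X _ (hker3 p) _ hL _ _ hN _ (haev3 p)
    exact (idealAddEquivOfMap _ _ _ hmap).trans
      (((LinearEquiv.ofEq _ _ (map_eq_cotangentIdeal (maximalIdeal (Lam13 p)))).toAddEquiv).trans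
        (maximalIdeal (Lam13 p)).cotangentEquivIdeal.symm.toAddEquiv)
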